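/- Let $\mu$ be a probability measure on a metric space, $F$ a 1-Lipschitz real function with median $M$, and suppose that for all measurable $A$ the surface measure satisfies $\mu^+(A) \ge c n^{1/p} \tilde a \log^{1-1/p}(1/\tilde a)$ where $\tilde a = \min(\mu(A), 1 - \mu(A))$, for constants $c > 0$, $n \ge 1$, $1 \le p \le 2$. Then for all $t > 0$, $\mu\{F > M + t\} \le \frac{1}{2}\exp(-c_1 n t^p)$ with $c_1 = c^p/p^p$. -/

import Mathlib

open MeasureTheory Filter Set


open Filter Set

lemma fence_lemma (G B : ℝ → ℝ) (hG : Monotone G)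
    (hB : Continuous B) (h0 : B 0 ≤ G 0) (t : ℝ)
    (H : ∀ m, 0 ≤ m → m < t → G m = B m →
      ∃ D K : ℝ, D < K ∧ HasDerivAt B D m ∧
        ∀ᶠ s in nhdsWithin m (Set.Ioi m), K * (s - m) ≤ G s - G m) :
    ∀ s, 0 ≤ s → s ≤ t → B s ≤ G s := by
  by_contra hcon
  push_neg at hcon
  obtain ⟨s₀, hs₀0, hs₀t, hs₀⟩ := hcon
  set bad : Set ℝ := {s | 0 ≤ s ∧ s ≤ t ∧ G s < B s} with hbad
  have hne : bad.Nonempty := ⟨s₀, hs₀0, hs₀t, hs₀⟩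
  have hbdd : BddBelow bad := ⟨0, fun s hs => hs.1⟩
  set m := sInf bad with hm
  have hm0 : 0 ≤ m := le_csInf hne fun s hs => hs.1
  have hmt : m ≤ t := (csInf_le hbdd hne.choose_spec).trans hne.choose_spec.2.1
  have step1 : ∀ s, 0 ≤ s → s < m → B s ≤ G s := by
    intro s hs hsm
    by_contra h
    push_neg at h
    exact absurd (csInf_le hbdd ⟨hs, hsm.le.trans hmt, h⟩) (not_le.mpr hsm)
  have step2 : B m ≤ G m := by
    rcases eq_or_lt_of_le hm0 with h | h
    · rw [← h]; exact h0
    · have hten : Tendsto B (nhdsWithin m (Set.Iio m)) (nhds (B m)) :=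
        (hB.tendsto m).mono_left nhdsWithin_le_nhds
      refine le_of_tendsto hten ?_
      filter_upwards [Ioo_mem_nhdsLT h] with s hs
      exact (step1 s hs.1.le hs.2).trans (hG hs.2.le)
  have hmnotbad : m ∉ bad := fun hmem => absurd step2 (not_le.mpr hmem.2.2)
  -- frequently bad above m
  have hfreq : ∃ᶠ s in nhdsWithin m (Set.Ioi m), s ∈ bad := by
    rw [Filter.frequently_iff]
    intro U hU
    obtain ⟨u, hu, hsub⟩ := mem_nhdsGT_iff_exists_Ioo_subset.mp hU
    have hu' : m < u := hu
    obtain ⟨s, hsbad, hslt⟩ := Real.lt_sInf_add_pos hne (show (0:ℝ) < u - m by linarith)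
    have hsm : m ≤ s := csInf_le hbdd hsbad
    have hsm' : m < s := lt_of_le_of_ne hsm (by rintro rfl; exact hmnotbad hsbad)
    exact ⟨s, hsub ⟨hsm', by rw [hm] at hslt; linarith⟩, hsbad⟩
  rcases eq_or_lt_of_le step2 with heq | hlt
  · -- contact case
    have hmt' : m < t := by
      rcases eq_or_lt_of_le hmt with h | h
      · exfalso
        obtain ⟨s, hsbad, hsm⟩ := (hfreq.and_eventually self_mem_nhdsWithin).exists
        have h1 : m < s := hsm
        have h2 : s ≤ t := hsbad.2.1
        rw [← h] at h2
        linarith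
      · exact h
    obtain ⟨D, K, hDK, hB', hslope⟩ := H m hm0 hmt' heq.symm
    have htslope : Tendsto (slope B m) (nhdsWithin m (Set.Ioi m)) (nhds D) :=
      (hasDerivAt_iff_tendsto_slope.mp hB').mono_left
        (nhdsWithin_mono m fun x hx => ne_of_gt hx)
    have hev : ∀ᶠ s in nhdsWithin m (Set.Ioi m), s ∉ bad := by
      filter_upwards [htslope.eventually_lt_const hDK, hslope, self_mem_nhdsWithin]
        with s h1 h2 h3
      intro hsbad
      have hsm : m < s := h3
      have h1' : (B s - B m) / (s - m) < K := by rwa [slope_def_field] at h1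
      have : B s - B m < K * (s - m) := by
        have := (div_lt_iff₀ (by linarith : (0:ℝ) < s - m)).mp h1'
        linarith
      have : G s < B s := hsbad.2.2
      linarith [heq]
    exact (hfreq.and_eventually hev).exists.elim fun s hs => hs.2 hs.1
  · -- B m < G m
    have hev : ∀ᶠ s in nhdsWithin m (Set.Ioi m), s ∉ bad := by
      have hBt : Tendsto B (nhdsWithin m (Set.Ioi m)) (nhds (B m)) :=
        (hB.tendsto m).mono_left nhdsWithin_le_nhds
      filter_upwards [hBt.eventually_lt_const hlt, self_mem_nhdsWithin] with s h1 h2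
      intro hsbad
      have : G m ≤ G s := hG (le_of_lt h2)
      linarith [hsbad.2.2]
    exact (hfreq.and_eventually hev).exists.elim fun s hs => hs.2 hs.1



lemma strict_aux (c c' p : ℝ) (n : ℕ) (hc' : 0 < c') (hcc : c' < c) (hn : 1 ≤ n)
    (hp1 : 1 ≤ p) (m : ℝ) (hm : 0 ≤ m) :
    (c' ^ p / p ^ p * n) * (p * m ^ (p - 1)) <
      c * (n : ℝ) ^ ((1:ℝ) / p) *
        (Real.log 2 + (c' ^ p / p ^ p * n) * m ^ p) ^ (1 - 1 / p) := by
  have hp0 : (0:ℝ) < p := lt_of_lt_of_le one_pos hp1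
  have hn0 : (0:ℝ) < n := by exact_mod_cast Nat.lt_of_lt_of_le Nat.zero_lt_one hn
  have hc0 : 0 < c := lt_trans hc' hcc
  have hlog2 : 0 < Real.log 2 := Real.log_pos one_lt_two
  have hexp : 0 ≤ 1 - 1 / p := by
    rw [sub_nonneg]
    exact div_le_one_of_le₀ hp1 hp0.le
  set k : ℝ := c' ^ p / p ^ p * n with hk
  have hk0 : 0 < k := by
    apply mul_pos _ hn0
    exact div_pos (Real.rpow_pos_of_pos hc' p) (Real.rpow_pos_of_pos hp0 p)
  rcases eq_or_lt_of_le hm with h0 | hmpos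
  · -- m = 0
    rw [← h0]
    rcases eq_or_lt_of_le hp1 with hp | hp
    · -- p = 1
      rw [hk, ← hp]
      norm_num [Real.rpow_one, Real.rpow_zero]
      nlinarith [Real.rpow_pos_of_pos hn0 (1:ℝ)]
    · -- p > 1
      rw [Real.zero_rpow (by linarith : p - 1 ≠ 0), Real.zero_rpow (ne_of_gt hp0)]
      have h1 : (0:ℝ) < (Real.log 2 + k * 0) ^ (1 - 1/p) := by
        apply Real.rpow_pos_of_pos; linarith
      have h2 : (0:ℝ) < (n:ℝ) ^ ((1:ℝ)/p) := Real.rpow_pos_of_pos hn0 _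
      have h3 : k * (p * (0:ℝ)) = 0 := by ring
      nlinarith [mul_pos (mul_pos hc0 h2) h1]
  · -- m > 0
    have key : (k * m ^ p) ^ (1 - 1/p) ≤ (Real.log 2 + k * m ^ p) ^ (1 - 1/p) := by
      apply Real.rpow_le_rpow (by positivity) (by linarith) hexp
    have hc'p : c' ^ p = c' * c' ^ (p - 1) := by
      nth_rewrite 1 [show p = 1 + (p - 1) by ring]
      rw [Real.rpow_add hc', Real.rpow_one]
    have hpp : p ^ p = p * p ^ (p - 1) := by
      nth_rewrite 2 [show p = 1 + (p - 1) by ring]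
      rw [Real.rpow_add hp0, Real.rpow_one]
    have e1 : (c' ^ p) ^ (1 - 1/p) = c' ^ (p - 1) := by
      rw [← Real.rpow_mul hc'.le, show p * (1 - 1/p) = p - 1 by field_simp]
    have e2 : (p ^ p) ^ (1 - 1/p) = p ^ (p - 1) := by
      rw [← Real.rpow_mul hp0.le, show p * (1 - 1/p) = p - 1 by field_simp]
    have e3 : (m ^ p) ^ (1 - 1/p) = m ^ (p - 1) := by
      rw [← Real.rpow_mul hmpos.le, show p * (1 - 1/p) = p - 1 by field_simp]
    have expand : (k * m ^ p) ^ (1 - 1/p) =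
        c' ^ (p - 1) * (n:ℝ) ^ ((1:ℝ) - 1/p) * m ^ (p - 1) / p ^ (p - 1) := by
      rw [hk, Real.mul_rpow (by positivity) (by positivity),
          Real.mul_rpow (by positivity) (by positivity),
          Real.div_rpow (by positivity) (by positivity), e1, e2, e3]
      ring
    have nn : (n:ℝ) ^ ((1:ℝ)/p) * (n:ℝ) ^ ((1:ℝ) - 1/p) = n := by
      rw [← Real.rpow_add hn0, show (1:ℝ)/p + (1 - 1/p) = 1 by ring, Real.rpow_one]
    have hPq : (0:ℝ) < p ^ (p - 1) := Real.rpow_pos_of_pos hp0 _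
    have hA : (0:ℝ) < c' ^ (p - 1) := Real.rpow_pos_of_pos hc' _
    have hMq : (0:ℝ) < m ^ (p - 1) := Real.rpow_pos_of_pos hmpos _
    have hNp : (0:ℝ) < (n:ℝ) ^ ((1:ℝ)/p) := Real.rpow_pos_of_pos hn0 _
    have hNq : (0:ℝ) < (n:ℝ) ^ ((1:ℝ) - 1/p) := Real.rpow_pos_of_pos hn0 _
    have lhs_eq : k * (p * m ^ (p - 1)) = c' * (c' ^ (p-1) * n * m ^ (p-1) / p ^ (p-1)) := by
      rw [hk, hc'p, hpp]
      field_simp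
    have rhs_ge : c * (n:ℝ) ^ ((1:ℝ)/p) * ((k * m ^ p) ^ (1 - 1/p)) ≤
        c * (n:ℝ) ^ ((1:ℝ)/p) * ((Real.log 2 + k * m ^ p) ^ (1 - 1/p)) := by
      apply mul_le_mul_of_nonneg_left key (by positivity)
    have mid_eq : c * (n:ℝ) ^ ((1:ℝ)/p) * ((k * m ^ p) ^ (1 - 1/p)) =
        c * (c' ^ (p-1) * n * m ^ (p-1) / p ^ (p-1)) := by
      rw [expand]
      linear_combination (c * c' ^ (p-1) * m ^ (p-1) / p ^ (p-1)) * nn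
    have hX : (0:ℝ) < c' ^ (p-1) * n * m ^ (p-1) / p ^ (p-1) := by positivity
    calc k * (p * m ^ (p - 1)) = c' * (c' ^ (p-1) * n * m ^ (p-1) / p ^ (p-1)) := lhs_eq
      _ < c * (c' ^ (p-1) * n * m ^ (p-1) / p ^ (p-1)) := by
          exact mul_lt_mul_of_pos_right hcc hX
      _ = c * (n:ℝ) ^ ((1:ℝ)/p) * ((k * m ^ p) ^ (1 - 1/p)) := mid_eq.symm
      _ ≤ _ := rhs_ge

/-- Lower Minkowski content of `A` with respect to `μ`. -/
noncomputable def minkContent {E : Type*} [MeasurableSpace E] [PseudoMetricSpace E]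
    (μ : Measure E) (A : Set E) : ENNReal :=
  Filter.liminf
    (fun ε : ℝ => (μ {x | Metric.infDist x A ≤ ε} - μ A) / ENNReal.ofReal ε)
    (nhdsWithin 0 (Set.Ioi 0))

/-- if `μ` satisfies the isoperimetric inequality
`μ⁺(A) ≥ c n^{1/p} ã log^{1-1/p}(1/ã)` (with `ã = min(μA, 1-μA)`) and `F` is
1-Lipschitz with median `M`, then `μ{F > M + t} ≤ (1/2) exp(-c₁ n t^p)` with
`c₁ = c^p/p^p`. -/
theorem concentration_from_isoperimetry {X : Type*} [MetricSpace X]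
    [MeasurableSpace X] [BorelSpace X] (μ : Measure X) [IsProbabilityMeasure μ]
    (c : ℝ) (hc : 0 < c) (n : ℕ) (hn : 1 ≤ n) (p : ℝ) (hp1 : 1 ≤ p) (hp2 : p ≤ 2)
    (hiso : ∀ A : Set X, MeasurableSet A →
      minkContent μ A ≥
        ENNReal.ofReal (c * (n : ℝ) ^ ((1 : ℝ) / p) *
          min (μ A).toReal (1 - (μ A).toReal) *
          (Real.log (1 / min (μ A).toReal (1 - (μ A).toReal))) ^ (1 - 1 / p)))
    (F : X → ℝ) (hF : LipschitzWith 1 F) (M : ℝ)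
    (hM₁ : μ {x | M ≤ F x} ≥ 1 / 2) (hM₂ : μ {x | F x ≤ M} ≥ 1 / 2) :
    ∀ t : ℝ, 0 < t →
      μ {x | M + t < F x} ≤
        ENNReal.ofReal ((1 / 2) * Real.exp (-(c ^ p / p ^ p) * n * t ^ p)) := by
  intro t ht
  have hp0 : (0:ℝ) < p := lt_of_lt_of_le one_pos hp1
  have hn0 : (0:ℝ) < n := by exact_mod_cast Nat.lt_of_lt_of_le Nat.zero_lt_one hn
  set A : ℝ → Set X := fun s => {x | F x ≤ M + s} with hA
  have measA : ∀ s, MeasurableSet (A s) := fun s =>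
    measurableSet_le hF.continuous.measurable measurable_const
  have finA : ∀ s, μ (A s) ≠ ⊤ := fun s => measure_ne_top μ _
  set G : ℝ → ℝ := fun s => (μ (A s)).toReal with hG
  have hsubA : ∀ ⦃a b : ℝ⦄, a ≤ b → A a ⊆ A b := by
    intro a b hab x hx
    simp only [hA, Set.mem_setOf_eq] at hx ⊢
    linarith
  have hGmono : Monotone G := fun a b hab =>
    ENNReal.toReal_mono (finA b) (measure_mono (hsubA hab))
  have hGhalf : ∀ s, 0 ≤ s → (1:ℝ)/2 ≤ G s := by
    intro s hs
    have h1 : (1/2 : ENNReal) ≤ μ (A s) := by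
      refine le_trans hM₂ (measure_mono ?_)
      intro x hx
      simp only [Set.mem_setOf_eq] at hx
      simp only [hA, Set.mem_setOf_eq]
      linarith
    have h2 := ENNReal.toReal_mono (finA s) h1
    have h3 : ((1:ENNReal)/2).toReal = 1/2 := by simp
    rw [h3] at h2
    exact h2
  have hAne : ∀ s, 0 ≤ s → (A s).Nonempty := by
    intro s hs
    rw [Set.nonempty_iff_ne_empty]
    intro h
    have := hGhalf s hs
    rw [hG] at this
    simp only [h, measure_empty] at this
    norm_num at this
  -- enlargement
  have enlarge : ∀ s, 0 ≤ s → ∀ ε : ℝ, 0 < ε →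
      {x | Metric.infDist x (A s) ≤ ε} ⊆ A (s + ε) := by
    intro s hs ε hε x hx
    simp only [Set.mem_setOf_eq] at hx
    simp only [hA, Set.mem_setOf_eq]
    refine le_of_forall_pos_le_add ?_
    intro δ hδ
    have h1 : Metric.infDist x (A s) < ε + δ := lt_of_le_of_lt hx (by linarith)
    obtain ⟨y, hy, hdist⟩ := (Metric.infDist_lt_iff (hAne s hs)).mp h1
    simp only [hA, Set.mem_setOf_eq] at hy
    have hyF : F y ≤ M + s := hy
    have h2 : dist (F x) (F y) ≤ dist x y := by
      simpa using hF.dist_le_mul x y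
    have h3 : F x - F y ≤ dist x y := by
      rw [Real.dist_eq] at h2
      exact le_trans (le_abs_self _) h2
    linarith
  -- slope lemma
  have slope_lem : ∀ m : ℝ, 0 ≤ m → ∀ K' : ℝ,
      K' < c * (n:ℝ) ^ ((1:ℝ)/p) * (1 - G m) *
        (Real.log (1 / (1 - G m))) ^ (1 - 1/p) →
      ∀ᶠ s in nhdsWithin m (Set.Ioi m), K' * (s - m) ≤ G s - G m := by
    intro m hm K' hK'
    set Km := c * (n:ℝ) ^ ((1:ℝ)/p) * (1 - G m) *
        (Real.log (1 / (1 - G m))) ^ (1 - 1/p) with hKm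
    by_cases hK'0 : K' ≤ 0
    · filter_upwards [self_mem_nhdsWithin] with s hs
      have h1 : G m ≤ G s := hGmono (le_of_lt hs)
      have h2 : (0:ℝ) < s - m := by
        have : m < s := hs
        linarith
      nlinarith
    · push_neg at hK'0
      have hKm0 : (0:ℝ) < Km := lt_trans hK'0 hK'
      have hiso' : ENNReal.ofReal Km ≤ minkContent μ (A m) := by
        have hmin : min (μ (A m)).toReal (1 - (μ (A m)).toReal) = 1 - G m := by
          apply min_eq_right
          have h1 := hGhalf m hm
          have h2 : G m = (μ (A m)).toReal := rfl
          rw [← h2]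
          linarith
        have := hiso (A m) (measA m)
        rw [hmin] at this
        exact this
      have hliminf : minkContent μ (A m) ≤
          Filter.liminf (fun ε : ℝ => (μ (A (m + ε)) - μ (A m)) / ENNReal.ofReal ε)
            (nhdsWithin 0 (Set.Ioi 0)) := by
        rw [minkContent]
        exact Filter.liminf_le_liminf (by
          filter_upwards [self_mem_nhdsWithin] with ε hε
          have hsub := enlarge m hm ε hε
          exact ENNReal.div_le_div_right (tsub_le_tsub_right (measure_mono hsub) _) _)
      have hlt : ENNReal.ofReal K' <
          Filter.liminf (fun ε : ℝ => (μ (A (m + ε)) - μ (A m)) / ENNReal.ofReal ε)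
            (nhdsWithin 0 (Set.Ioi 0)) := by
        refine lt_of_lt_of_le ?_ (hiso'.trans hliminf)
        exact (ENNReal.ofReal_lt_ofReal_iff hKm0).mpr hK'
      have hev := Filter.eventually_lt_of_lt_liminf hlt
      have hev2 : ∀ᶠ ε in nhdsWithin (0:ℝ) (Set.Ioi 0), K' * ε ≤ G (m + ε) - G m := by
        filter_upwards [hev, self_mem_nhdsWithin] with ε h1 h2
        have hε : (0:ℝ) < ε := h2
        have hne0 : ENNReal.ofReal ε ≠ 0 := by
          simp [ENNReal.ofReal_eq_zero, not_le, hε]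
        have h3 : ENNReal.ofReal K' * ENNReal.ofReal ε ≤ μ (A (m+ε)) - μ (A m) :=
          (ENNReal.le_div_iff_mul_le (Or.inl hne0) (Or.inl ENNReal.ofReal_ne_top)).mp h1.le
        rw [← ENNReal.ofReal_mul hK'0.le] at h3
        have hdne : μ (A (m+ε)) - μ (A m) ≠ ⊤ :=
          ne_top_of_le_ne_top (finA (m+ε)) tsub_le_self
        have h4 : K' * ε ≤ (μ (A (m+ε)) - μ (A m)).toReal :=
          (ENNReal.ofReal_le_iff_le_toReal hdne).mp h3
        rwa [ENNReal.toReal_sub_of_le (measure_mono (hsubA (by linarith))) (finA _)] at h4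
      -- translate from 0 to m
      obtain ⟨u, hu, hsub⟩ := mem_nhdsGT_iff_exists_Ioo_subset.mp hev2
      rw [Filter.eventually_iff]
      have huu : (0:ℝ) < u := hu
      refine mem_nhdsGT_iff_exists_Ioo_subset.mpr
        ⟨m + u, Set.mem_Ioi.mpr (by linarith), ?_⟩
      intro s hs
      have hεmem : s - m ∈ Set.Ioo (0:ℝ) u := ⟨by linarith [hs.1], by linarith [hs.2]⟩
      have h : K' * (s - m) ≤ G (m + (s - m)) - G m := hsub hεmem
      have h2 : m + (s - m) = s := by ring
      rw [h2] at h
      exact h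
  -- main bound for c' < c
  have main : ∀ c' : ℝ, 0 < c' → c' < c →
      (μ {x | M + t < F x}).toReal ≤ 1/2 * Real.exp (-(c'^p/p^p) * n * t^p) := by
    intro c' hc'0 hc'c
    set k : ℝ := c' ^ p / p ^ p * n with hk
    have hk0 : 0 < k := by
      apply mul_pos _ hn0
      exact div_pos (Real.rpow_pos_of_pos hc'0 p) (Real.rpow_pos_of_pos hp0 p)
    set B : ℝ → ℝ := fun s => 1 - 1/2 * Real.exp (-(k * s ^ p)) with hB
    have hBcont : Continuous B := by
      apply Continuous.sub continuous_const
      apply Continuous.mul continuous_const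
      apply Real.continuous_exp.comp
      apply Continuous.neg
      apply Continuous.mul continuous_const
      exact continuous_id.rpow_const fun x => Or.inr (by linarith)
    have hB0 : B 0 ≤ G 0 := by
      have hBv : B 0 = 1/2 := by
        simp only [hB]
        rw [Real.zero_rpow (ne_of_gt hp0)]
        norm_num
      rw [hBv]
      exact hGhalf 0 le_rfl
    have hfence : ∀ s, 0 ≤ s → s ≤ t → B s ≤ G s := by
      refine fence_lemma G B hGmono hBcont hB0 t ?_
      intro m hm0 hmt' heq
      set Rm : ℝ := 1/2 * Real.exp (-(k * m ^ p)) with hRm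
      have hRm0 : 0 < Rm := by positivity
      have hGm : 1 - G m = Rm := by
        rw [heq]
        simp only [hB, hRm]
        ring
      have hlog : Real.log (1 / Rm) = Real.log 2 + k * m ^ p := by
        have h1 : (1:ℝ) / Rm = 2 * Real.exp (k * m ^ p) := by
          rw [hRm, Real.exp_neg]
          field_simp
        rw [h1, Real.log_mul two_ne_zero (Real.exp_ne_zero _), Real.log_exp]
      -- derivative
      have h1 : HasDerivAt (fun s : ℝ => s ^ p) (p * m ^ (p-1)) m :=
        Real.hasDerivAt_rpow_const (Or.inr hp1)
      have h2 : HasDerivAt (fun s : ℝ => -(k * s ^ p)) (-(k * (p * m ^ (p-1)))) m :=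
        ((h1.const_mul k).neg)
      have h3 := h2.exp
      have h4 := h3.const_mul (1/2 : ℝ)
      have h5 := h4.const_sub 1
      have hder : HasDerivAt B (Rm * (k * (p * m ^ (p-1)))) m := by
        simp only [hB]
        refine h5.congr_deriv ?_
        rw [hRm]
        ring
      -- strictness
      set Km : ℝ := c * (n:ℝ) ^ ((1:ℝ)/p) * (1 - G m) *
          (Real.log (1 / (1 - G m))) ^ (1 - 1/p) with hKm
      have hKmeq : Km = c * (n:ℝ) ^ ((1:ℝ)/p) * Rm *
          (Real.log 2 + k * m ^ p) ^ (1 - 1/p) := by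
        rw [hKm, hGm, hlog]
      have hstrict : Rm * (k * (p * m ^ (p-1))) < Km := by
        rw [hKmeq]
        have := strict_aux c c' p n hc'0 hc'c hn hp1 m hm0
        rw [← hk] at this
        nlinarith [this, hRm0]
      refine ⟨Rm * (k * (p * m ^ (p-1))), (Rm * (k * (p * m ^ (p-1))) + Km)/2,
        by linarith, hder, ?_⟩
      apply slope_lem m hm0
      rw [← hKm]
      linarith
    -- conclude
    have hBt := hfence t ht.le le_rfl
    have hcompl : G t + (μ {x | M + t < F x}).toReal = 1 := by
      have hc1 : A t ∪ {x | M + t < F x} = Set.univ := by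
        ext x
        simp only [Set.mem_union, Set.mem_setOf_eq, Set.mem_univ, iff_true]
        exact le_or_gt (F x) (M + t)
      have hc2 : Disjoint (A t) {x | M + t < F x} := by
        rw [Set.disjoint_left]
        intro x hx1 hx2
        simp only [hA, Set.mem_setOf_eq] at hx1
        simp only [Set.mem_setOf_eq] at hx2
        linarith
      have hSmeas : MeasurableSet {x | M + t < F x} :=
        measurableSet_lt measurable_const hF.continuous.measurable
      have hm1 : μ (A t) + μ {x | M + t < F x} = 1 := by
        rw [← measure_union hc2 hSmeas, hc1, measure_univ]
      have hm2 := congrArg ENNReal.toReal hm1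
      rwa [ENNReal.toReal_add (finA t) (measure_ne_top μ _), ENNReal.toReal_one] at hm2
    have hBtval : 1 - B t = 1/2 * Real.exp (-(k * t ^ p)) := by
      simp only [hB]
      ring
    have hexpeq : -(k * t ^ p) = -(c'^p/p^p) * n * t^p := by
      rw [hk]
      ring
    calc (μ {x | M + t < F x}).toReal = 1 - G t := by linarith
      _ ≤ 1 - B t := by linarith
      _ = 1/2 * Real.exp (-(c'^p/p^p) * n * t^p) := by rw [hBtval, hexpeq]
  -- limit as c' → c
  have hcont : ContinuousAt
      (fun c' : ℝ => 1/2 * Real.exp (-(c'^p/p^p) * n * t^p)) c := by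
    have h1 : ContinuousAt (fun x : ℝ => x ^ p) c :=
      Real.continuousAt_rpow_const c p (Or.inl hc.ne')
    have h2 : ContinuousAt (fun x : ℝ => -(x^p/p^p) * n * t^p) c :=
      (((h1.div_const _).neg).mul continuousAt_const).mul continuousAt_const
    exact (h2.rexp).const_mul _
  have htend : Tendsto (fun c' : ℝ => 1/2 * Real.exp (-(c'^p/p^p) * n * t^p))
      (nhdsWithin c (Set.Iio c)) (nhds (1/2 * Real.exp (-(c^p/p^p) * n * t^p))) :=
    hcont.tendsto.mono_left nhdsWithin_le_nhds
  have hevc : ∀ᶠ c' in nhdsWithin c (Set.Iio c),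
      (μ {x | M + t < F x}).toReal ≤ 1/2 * Real.exp (-(c'^p/p^p) * n * t^p) := by
    filter_upwards [Ioo_mem_nhdsLT_of_mem (show c ∈ Set.Ioc (0:ℝ) c from ⟨hc, le_rfl⟩)]
      with c' hc'
    exact main c' hc'.1 hc'.2
  have hfinal := ge_of_tendsto htend hevc
  rw [ENNReal.le_ofReal_iff_toReal_le (measure_ne_top μ _) (by positivity)]
  exact hfinal
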